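/- arXiv:1907.04115 — 3 statements merged into one kernel-verified Lean document; each statement's English description precedes it below -/
import Mathlib

section
/- For any function u : [0,1] → ℝ of bounded variation and any N ≥ 1, the total variation of the Bernstein polynomial B_N[u] on [0,1] is at most the total variation of u on [0,1]; i.e., ∫_0^1 |B_N'[u](x)| dx ≤ TV(u). (The Bernstein reconstruction is total variation diminishing.) -/
open Finset
open intervalIntegral

noncomputable def bernsteinOp (N : ℕ) (u : ℝ → ℝ) (x : ℝ) : ℝ :=
  ∑ n ∈ Finset.range (N + 1), u (n / N) * (N.choose n) * x ^ n * (1 - x) ^ (N - n)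

lemma beta_nat : ∀ (m k : ℕ), ∫ x in (0:ℝ)..1, x ^ k * (1 - x) ^ m
    = (k.factorial * m.factorial : ℝ) / (k + m + 1).factorial := by
  intro m
  induction m with
  | zero =>
    intro k
    simp [integral_pow, Nat.factorial_succ]
    have : ((k:ℝ) + 1) ≠ 0 := by positivity
    have : (k.factorial : ℝ) ≠ 0 := by positivity
    field_simp
  | succ m ih =>
    intro k
    have hIBP := intervalIntegral.integral_mul_deriv_eq_deriv_mul
      (a := (0:ℝ)) (b := 1)
      (u := fun x => (1 - x) ^ (m + 1)) (v := fun x => x ^ (k + 1) / (k + 1))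
      (u' := fun x => -((m + 1) * (1 - x) ^ m)) (v' := fun x => x ^ k)
      (fun x _ => by
        have h1 : HasDerivAt (fun x : ℝ => 1 - x) (-1) x := (hasDerivAt_id x).const_sub 1
        have h2 := (hasDerivAt_pow (m + 1) (1 - x)).comp x h1
        exact h2.congr_deriv (by rw [Nat.add_sub_cancel]; push_cast; ring))
      (fun x _ => by
        have h := (hasDerivAt_pow (k + 1) x).div_const (k + 1)
        convert h using 1
        have : ((k:ℝ) + 1) ≠ 0 := by positivity
        field_simp
        rw [Nat.add_sub_cancel]; push_cast; ring)
      ((Continuous.intervalIntegrable (by continuity) _ _))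
      ((Continuous.intervalIntegrable (by continuity) _ _))
    have hmain : ∫ x in (0:ℝ)..1, (1 - x) ^ (m+1) * x ^ k
        = ((m:ℝ)+1) / ((k:ℝ)+1) * ∫ x in (0:ℝ)..1, x ^ (k+1) * (1 - x) ^ m := by
      rw [hIBP]
      simp only [one_pow, sub_self]
      rw [zero_pow (Nat.succ_ne_zero m), zero_pow (Nat.succ_ne_zero k)]
      simp only [zero_mul, mul_zero, one_mul, zero_div, sub_zero, zero_sub]
      rw [← intervalIntegral.integral_neg, ← intervalIntegral.integral_const_mul]
      congr 1
      ext x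
      have : ((k:ℝ) + 1) ≠ 0 := by positivity
      field_simp
    have h2 : ∫ x in (0:ℝ)..1, x ^ k * (1 - x) ^ (m+1)
        = ((m:ℝ)+1) / ((k:ℝ)+1) * ∫ x in (0:ℝ)..1, x ^ (k+1) * (1 - x) ^ m := by
      rw [← hmain]; congr 1; ext x; ring
    rw [h2, ih (k+1)]
    rw [show k + 1 + m + 1 = k + (m + 1) + 1 by ring]
    rw [Nat.factorial_succ (k), Nat.factorial_succ (m)]
    push_cast
    have h3 : ((k:ℝ) + 1) ≠ 0 := by positivity
    have h4 : ((k + (m+1) + 1).factorial : ℝ) ≠ 0 := by positivity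
    field_simp

lemma bern_hasDerivAt (u : ℝ → ℝ) (N : ℕ) (hN : 1 ≤ N) (x : ℝ) :
    HasDerivAt (bernsteinOp N u)
      (∑ m ∈ Finset.range N, (u ((m+1 : ℕ) / N) - u (m / N)) * ((N:ℝ) * ((N-1).choose m)) *
        (x ^ m * (1 - x) ^ (N - 1 - m))) x := by
  have key : ∀ n ∈ Finset.range (N+1),
      HasDerivAt (fun y : ℝ => u (n / N) * (N.choose n) * y ^ n * (1 - y) ^ (N - n))
      (u (n / N) * (N.choose n) * (n * x ^ (n-1)) * (1 - x) ^ (N - n)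
        + u (n / N) * (N.choose n) * x ^ n * ((N - n : ℕ) * (1 - x) ^ (N - n - 1) * (-1))) x := by
    intro n _
    have h1 : HasDerivAt (fun y : ℝ => u (n / N) * (N.choose n) * y ^ n)
        (u (n / N) * (N.choose n) * (n * x ^ (n-1))) x :=
      (hasDerivAt_pow n x).const_mul _
    have hg : HasDerivAt (fun y : ℝ => (1 - y) ^ (N - n))
        ((N - n : ℕ) * (1 - x) ^ (N - n - 1) * (-1)) x :=
      (hasDerivAt_pow (N - n) (1 - x)).comp x ((hasDerivAt_id x).const_sub 1)
    exact h1.mul hg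
  have hsum := HasDerivAt.sum key
  have heq : ∑ n ∈ Finset.range (N+1),
      (u (n / N) * (N.choose n) * (n * x ^ (n-1)) * (1 - x) ^ (N - n)
        + u (n / N) * (N.choose n) * x ^ n * ((N - n : ℕ) * (1 - x) ^ (N - n - 1) * (-1)))
      = ∑ m ∈ Finset.range N, (u ((m+1 : ℕ) / N) - u (m / N)) * ((N:ℝ) * ((N-1).choose m)) *
        (x ^ m * (1 - x) ^ (N - 1 - m)) := by
    rw [Finset.sum_add_distrib, Finset.sum_range_succ', Finset.sum_range_succ]
    simp only [Nat.cast_zero, zero_mul, mul_zero, add_zero, Nat.sub_self, Nat.cast_ofNat]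
    rw [← Finset.sum_add_distrib]
    apply Finset.sum_congr rfl
    intro m hm
    have hm' : m < N := Finset.mem_range.mp hm
    have k1 : N.choose (m+1) * (m+1) = N * (N-1).choose m := by
      have h := Nat.add_one_mul_choose_eq (N-1) m
      simp only [Nat.succ_eq_add_one, Nat.sub_add_cancel hN] at h
      exact h.symm
    have k2 : N.choose m * (N - m) = N * (N-1).choose m := by
      rw [← Nat.choose_succ_right_eq]; exact k1
    have k1' : ((N.choose (m+1) : ℝ)) * ((m:ℝ)+1) = (N:ℝ) * ((N-1).choose m : ℝ) := by
      exact_mod_cast k1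
    have k2' : ((N.choose m : ℝ)) * ((N:ℝ) - m) = (N:ℝ) * ((N-1).choose m : ℝ) := by
      rw [← Nat.cast_sub hm'.le]
      exact_mod_cast k2
    rw [show N - (m+1) = N - 1 - m from by omega, show N - m - 1 = N - 1 - m from by omega,
      show m + 1 - 1 = m from rfl]
    push_cast [Nat.cast_sub hm'.le]
    linear_combination (u (((m:ℝ)+1)/N) * x ^ m * (1-x) ^ (N-1-m)) * k1'
      - (u ((m:ℝ)/N) * x ^ m * (1-x) ^ (N-1-m)) * k2'
  rw [heq] at hsum
  exact hsum.congr_of_eventuallyEq (Filter.Eventually.of_forall fun y => by simp [bernsteinOp, Finset.sum_apply])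

theorem bernstein_TVD (u : ℝ → ℝ) (hu : BoundedVariationOn u (Set.Icc (0:ℝ) 1))
    (N : ℕ) (hN : 1 ≤ N) :
    ENNReal.ofReal (∫ x in (0:ℝ)..1, |deriv (bernsteinOp N u) x|) ≤
      eVariationOn u (Set.Icc (0:ℝ) 1) := by
  have hN0 : (0:ℝ) < N := by exact_mod_cast hN
  set D : ℝ → ℝ := fun x => ∑ m ∈ Finset.range N,
    (u ((m+1 : ℕ) / N) - u (m / N)) * ((N:ℝ) * ((N-1).choose m)) *
      (x ^ m * (1 - x) ^ (N - 1 - m)) with hD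
  have hderiv : deriv (bernsteinOp N u) = D := funext fun x => (bern_hasDerivAt u N hN x).deriv
  rw [hderiv]
  set g : ℝ → ℝ := fun x => ∑ m ∈ Finset.range N,
    |u ((m+1 : ℕ) / N) - u (m / N)| * ((N:ℝ) * ((N-1).choose m)) *
      (x ^ m * (1 - x) ^ (N - 1 - m)) with hg
  have hDcont : Continuous D := by
    apply continuous_finset_sum
    intro m _
    fun_prop
  have hgcont : Continuous g := by
    apply continuous_finset_sum
    intro m _
    fun_prop
  have hle : ∀ x ∈ Set.Icc (0:ℝ) 1, |D x| ≤ g x := by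
    intro x hx
    refine (Finset.abs_sum_le_sum_abs _ _).trans ?_
    apply Finset.sum_le_sum
    intro m _
    rw [abs_mul, abs_mul]
    have h1 : |((N:ℝ) * ((N-1).choose m))| = (N:ℝ) * ((N-1).choose m) :=
      abs_of_nonneg (by positivity)
    have h2 : |x ^ m * (1 - x) ^ (N - 1 - m)| = x ^ m * (1 - x) ^ (N - 1 - m) := by
      apply abs_of_nonneg
      have hx0 := hx.1
      have hx1 : 0 ≤ 1 - x := by linarith [hx.2]
      positivity
    rw [h1, h2]
  have hint : (∫ x in (0:ℝ)..1, |D x|) ≤ ∫ x in (0:ℝ)..1, g x := by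
    apply intervalIntegral.integral_mono_on (by norm_num)
      ((hDcont.abs).intervalIntegrable _ _) (hgcont.intervalIntegrable _ _)
    intro x hx
    exact hle x hx
  have hgint : (∫ x in (0:ℝ)..1, g x)
      = ∑ m ∈ Finset.range N, |u ((m+1 : ℕ) / N) - u (m / N)| := by
    rw [hg]
    rw [intervalIntegral.integral_finset_sum]
    · apply Finset.sum_congr rfl
      intro m hm
      have hm' : m < N := Finset.mem_range.mp hm
      rw [intervalIntegral.integral_const_mul]
      have hβ := beta_nat (N - 1 - m) m
      rw [show m + (N - 1 - m) + 1 = N from by omega] at hβ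
      rw [hβ]
      set a := |u ((m+1 : ℕ) / (N:ℝ)) - u (m / N)| with ha
      have hnat : (N-1).choose m * m.factorial * (N-1-m).factorial = (N-1).factorial :=
        Nat.choose_mul_factorial_mul_factorial (by omega)
      have hnat2 : N * (N-1).factorial = N.factorial := Nat.mul_factorial_pred (by omega)
      have hnr : ((N-1).choose m : ℝ) * m.factorial * (N-1-m).factorial = (N-1).factorial := by
        exact_mod_cast hnat
      have hnr2 : (N:ℝ) * (N-1).factorial = N.factorial := by exact_mod_cast hnat2
      have hfac : (N.factorial : ℝ) ≠ 0 := by positivity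
      have key : (m.factorial : ℝ) * (N-1-m).factorial / N.factorial
          * ((N:ℝ) * ((N-1).choose m)) = 1 := by
        rw [div_mul_eq_mul_div, div_eq_one_iff_eq hfac]
        linear_combination (N:ℝ) * hnr + hnr2
      linear_combination a * key
    · intro m _
      apply Continuous.intervalIntegrable
      fun_prop
  have hstep : ENNReal.ofReal (∫ x in (0:ℝ)..1, |D x|)
      ≤ ENNReal.ofReal (∑ m ∈ Finset.range N, |u ((m+1 : ℕ) / N) - u (m / N)|) :=
    ENNReal.ofReal_le_ofReal (hgint ▸ hint)
  refine hstep.trans ?_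
  rw [ENNReal.ofReal_sum_of_nonneg (fun m _ => abs_nonneg _)]
  set v : ℕ → ℝ := fun i => ((min i N : ℕ) : ℝ) / N with hv
  have hmono : Monotone v := by
    intro i j hij
    have hc : ((min i N : ℕ):ℝ) ≤ ((min j N : ℕ):ℝ) := Nat.cast_le.mpr (min_le_min hij le_rfl)
    exact (div_le_div_iff_of_pos_right hN0).mpr hc
  have hmem : ∀ i, v i ∈ Set.Icc (0:ℝ) 1 := by
    intro i
    constructor
    · positivity
    · rw [div_le_one hN0]
      exact_mod_cast Nat.cast_le.mpr (min_le_right i N)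
  have hsum := eVariationOn.sum_le (f := u) (n := N) hmono hmem
  refine le_trans (le_of_eq ?_) hsum
  apply Finset.sum_congr rfl
  intro i hi
  have hi' : i < N := Finset.mem_range.mp hi
  have e1 : v i = (i : ℝ) / N := by
    rw [hv]; simp [Nat.min_eq_left hi'.le]
  have e2 : v (i+1) = ((i+1 : ℕ) : ℝ) / N := by
    rw [hv]; simp [Nat.min_eq_left hi']
  rw [e1, e2, edist_dist, Real.dist_eq]
end

section
/- If u : [0,1] → ℝ is continuous and convex, then the sequence of Bernstein polynomials decreases monotonically to u: for all N ≥ 1 and x in [0,1], B_N[u](x) ≥ B_{N+1}[u](x) ≥ u(x). -/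
open Finset

lemma bernstein_sum_w (M : ℕ) (x : ℝ) :
    ∑ n ∈ Finset.range (M+1), (M.choose n : ℝ) * x ^ n * (1-x) ^ (M-n) = 1 := by
  have h := add_pow x (1-x) M
  have hx1 : x + (1-x) = 1 := by ring
  rw [hx1, one_pow] at h
  refine Eq.trans ?_ h.symm
  exact Finset.sum_congr rfl (fun n _ => by ring)

lemma bernstein_sum_mean (M : ℕ) (hM : 1 ≤ M) (x : ℝ) :
    ∑ n ∈ Finset.range (M+1), ((M.choose n : ℝ) * x ^ n * (1-x) ^ (M-n)) • ((n:ℝ)/M) = x := by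
  obtain ⟨K, rfl⟩ : ∃ K, M = K + 1 := ⟨M - 1, by omega⟩
  rw [Finset.sum_range_succ']
  have hK : ((K:ℝ)+1) ≠ 0 := by positivity
  have key : ∀ i ∈ Finset.range (K+1),
      (((K+1).choose (i+1) : ℝ) * x ^ (i+1) * (1-x) ^ (K+1-(i+1))) • ((((i:ℕ)+1 : ℕ):ℝ)/((K:ℕ)+1:ℕ))
      = x * ((K.choose i : ℝ) * x ^ i * (1-x) ^ (K-i)) := by
    intro i hi
    have h1 : ((K+1).choose (i+1) : ℝ) * ((i:ℝ)+1) = ((K:ℝ)+1) * (K.choose i : ℝ) := by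
      exact_mod_cast (Nat.add_one_mul_choose_eq K i).symm
    have h2 : K + 1 - (i+1) = K - i := by omega
    rw [h2, smul_eq_mul]
    push_cast
    field_simp
    linear_combination (x^(i+1) * (1-x)^(K-i)) * h1
  rw [Finset.sum_congr rfl key, ← Finset.mul_sum, bernstein_sum_w K x]
  push_cast
  simp

lemma u_le_bern (u : ℝ → ℝ) (hconv : ConvexOn ℝ (Set.Icc (0:ℝ) 1) u)
    (M : ℕ) (hM : 1 ≤ M) (x : ℝ) (hx : x ∈ Set.Icc (0:ℝ) 1) :
    u x ≤ bernsteinOp M u x := by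
  obtain ⟨hx0, hx1⟩ := hx
  have h := hconv.map_sum_le (t := Finset.range (M+1))
    (w := fun n => (M.choose n : ℝ) * x ^ n * (1-x) ^ (M-n))
    (p := fun n => (n:ℝ)/M)
    (fun i _ => mul_nonneg (mul_nonneg (Nat.cast_nonneg _) (pow_nonneg hx0 _)) (pow_nonneg (by linarith) _))
    (bernstein_sum_w M x)
    (fun i hi => by
      constructor
      · positivity
      · rw [div_le_one (by exact_mod_cast hM)]
        exact_mod_cast Nat.lt_succ_iff.mp (Finset.mem_range.mp hi))
  rw [bernstein_sum_mean M hM x] at h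
  refine h.trans_eq ?_
  unfold bernsteinOp
  exact Finset.sum_congr rfl (fun n _ => by rw [smul_eq_mul]; ring)

lemma bern_key (u : ℝ → ℝ) (hconv : ConvexOn ℝ (Set.Icc (0:ℝ) 1) u) (N : ℕ) (hN : 1 ≤ N)
    (x : ℝ) (hx0 : 0 ≤ x) (hx1 : x ≤ 1) (k : ℕ) (hk : k < N) :
    u (((k:ℝ)+1)/((N:ℝ)+1)) * (((N+1).choose (k+1) : ℝ)) * x^(k+1) * (1-x)^(N-k)
      ≤ u ((k:ℝ)/N) * ((N.choose k : ℝ)) * x^(k+1) * (1-x)^(N-k)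
        + u (((k:ℝ)+1)/N) * ((N.choose (k+1) : ℝ)) * x^(k+1) * (1-x)^(N-k) := by
  set C1 : ℝ := (N.choose k : ℝ) with hC1
  set C2 : ℝ := (N.choose (k+1) : ℝ) with hC2
  set C : ℝ := ((N+1).choose (k+1) : ℝ) with hCdef
  have hC : C = C1 + C2 := by
    rw [hCdef, hC1, hC2]; exact_mod_cast congrArg (Nat.cast (R := ℝ)) (Nat.choose_succ_succ N k)
  have hCpos : (0:ℝ) < C := by
    rw [hCdef]; exact_mod_cast Nat.choose_pos (by omega : k+1 ≤ N+1)
  have hNpos : (0:ℝ) < N := by exact_mod_cast hN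
  have h1 : C2 * ((k:ℝ)+1) = C1 * ((N:ℝ) - (k:ℝ)) := by
    have := Nat.choose_succ_right_eq N k
    have hcast : ((N - k : ℕ) : ℝ) = (N:ℝ) - k := by
      rw [Nat.cast_sub (le_of_lt hk)]
    rw [hC2, hC1, ← hcast]
    exact_mod_cast this
  have h2 : ((N:ℝ)+1) * C1 = C * ((k:ℝ)+1) := by
    rw [hC1, hCdef]; exact_mod_cast Nat.add_one_mul_choose_eq N k
  set a : ℝ := C1 / C with ha'
  set b : ℝ := C2 / C with hb'
  have ha : 0 ≤ a := by positivity
  have hb : 0 ≤ b := by positivity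
  have hab : a + b = 1 := by
    rw [ha', hb', ← add_div, ← hC]; exact div_self hCpos.ne'
  have hp1 : (k:ℝ)/N ∈ Set.Icc (0:ℝ) 1 := by
    constructor
    · positivity
    · rw [div_le_one hNpos]; exact_mod_cast le_of_lt hk
  have hp2 : ((k:ℝ)+1)/N ∈ Set.Icc (0:ℝ) 1 := by
    constructor
    · positivity
    · rw [div_le_one hNpos]; exact_mod_cast hk
  have hmean : a * ((k:ℝ)/N) + b * (((k:ℝ)+1)/N) = ((k:ℝ)+1)/((N:ℝ)+1) := by
    rw [ha', hb']
    field_simp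
    linear_combination ((N:ℝ)+1) * h1 + (N:ℝ) * h2
  have hj := hconv.2 hp1 hp2 ha hb hab
  rw [smul_eq_mul, smul_eq_mul, hmean, smul_eq_mul, smul_eq_mul] at hj
  have hw : (0:ℝ) ≤ x^(k+1) * (1-x)^(N-k) :=
    mul_nonneg (pow_nonneg hx0 _) (pow_nonneg (by linarith) _)
  have hmul := mul_le_mul_of_nonneg_right hj (mul_nonneg hCpos.le hw)
  calc u (((k:ℝ)+1)/((N:ℝ)+1)) * C * x^(k+1) * (1-x)^(N-k)
      = u (((k:ℝ)+1)/((N:ℝ)+1)) * (C * (x^(k+1) * (1-x)^(N-k))) := by ring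
    _ ≤ (a * u ((k:ℝ)/N) + b * u (((k:ℝ)+1)/N)) * (C * (x^(k+1) * (1-x)^(N-k))) := hmul
    _ = u ((k:ℝ)/N) * C1 * x^(k+1) * (1-x)^(N-k)
        + u (((k:ℝ)+1)/N) * C2 * x^(k+1) * (1-x)^(N-k) := by
        rw [ha', hb']; field_simp

lemma bern_mono (u : ℝ → ℝ) (hconv : ConvexOn ℝ (Set.Icc (0:ℝ) 1) u) (N : ℕ) (hN : 1 ≤ N)
    (x : ℝ) (hx : x ∈ Set.Icc (0:ℝ) 1) : bernsteinOp (N+1) u x ≤ bernsteinOp N u x := by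
  obtain ⟨hx0, hx1⟩ := hx
  have hNpos : (0:ℝ) < N := by exact_mod_cast hN
  have hBN : bernsteinOp N u x
      = ((∑ k ∈ range N, u ((k:ℝ)/N) * ((N.choose k : ℝ)) * x^(k+1) * (1-x)^(N-k))
          + u ((N:ℝ)/N) * x^(N+1))
        + ((∑ k ∈ range N, u (((k:ℝ)+1)/N) * ((N.choose (k+1) : ℝ)) * x^(k+1) * (1-x)^(N-k))
          + u 0 * (1-x)^(N+1)) := by
    unfold bernsteinOp
    have split : ∀ n ∈ range (N+1),
        u ((n:ℝ) / N) * (N.choose n : ℝ) * x ^ n * (1 - x) ^ (N - n)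
        = u ((n:ℝ)/N) * (N.choose n : ℝ) * x ^ n * (1-x)^(N-n) * x
          + u ((n:ℝ)/N) * (N.choose n : ℝ) * x ^ n * (1-x)^(N-n) * (1-x) := by
      intro n _; ring
    rw [Finset.sum_congr rfl split, Finset.sum_add_distrib]
    congr 1
    · rw [Finset.sum_range_succ]
      congr 1
      · refine Finset.sum_congr rfl fun k hk => ?_
        ring
      · rw [Nat.choose_self, Nat.sub_self]
        push_cast
        ring
    · rw [Finset.sum_range_succ']
      congr 1
      · refine Finset.sum_congr rfl fun k hk => ?_
        have hk' : k < N := Finset.mem_range.mp hk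
        have hsub : N - k = (N - (k+1)) + 1 := by omega
        rw [hsub, pow_succ]
        push_cast
        ring
      · simp [pow_succ]; try ring
  have hB1 : bernsteinOp (N+1) u x
      = (∑ k ∈ range N, u (((k:ℝ)+1)/((N:ℝ)+1)) * (((N+1).choose (k+1) : ℝ)) * x^(k+1) * (1-x)^(N-k))
        + u 0 * (1-x)^(N+1) + u (((N:ℝ)+1)/((N:ℝ)+1)) * x^(N+1) := by
    unfold bernsteinOp
    rw [Finset.sum_range_succ, Finset.sum_range_succ']
    congr 1
    congr 1
    · refine Finset.sum_congr rfl fun k hk => ?_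
      have hsub : N + 1 - (k+1) = N - k := by omega
      rw [hsub]
      push_cast
      ring
    · simp [pow_succ]; try ring
    · rw [Nat.choose_self, Nat.sub_self]
      push_cast
      ring
  have hNN : ((N:ℝ))/N = 1 := div_self hNpos.ne'
  have hN1 : ((N:ℝ)+1)/((N:ℝ)+1) = 1 := div_self (by positivity)
  have hsum := Finset.sum_le_sum (fun k hk =>
    bern_key u hconv N hN x hx0 hx1 k (Finset.mem_range.mp hk))
  rw [Finset.sum_add_distrib] at hsum
  rw [hBN, hB1, hNN, hN1]
  linarith

theorem bernstein_convex_monotone_decreasing_to_u (u : ℝ → ℝ)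
    (hc : ContinuousOn u (Set.Icc (0:ℝ) 1)) (hconv : ConvexOn ℝ (Set.Icc (0:ℝ) 1) u)
    (N : ℕ) (hN : 1 ≤ N) (x : ℝ) (hx : x ∈ Set.Icc (0:ℝ) 1) :
    bernsteinOp (N + 1) u x ≤ bernsteinOp N u x ∧ u x ≤ bernsteinOp (N + 1) u x := by
  exact ⟨bern_mono u hconv N hN x hx, u_le_bern u hconv (N+1) (by omega) x hx⟩
end

section
/- Let u : [0,1] → ℝ be bounded and twice differentiable at a point x in [0,1]. Then lim_{N→∞} N (u(x) − B_N[u](x)) = −x(1−x) u''(x)/2 (Voronovskaya-type limit). -/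
open Finset

namespace BVaux

lemma sum_p (N : ℕ) (x : ℝ) :
    ∑ n ∈ Finset.range (N + 1), (N.choose n : ℝ) * x ^ n * (1 - x) ^ (N - n) = 1 := by
  have h := add_pow x (1 - x) N
  have hx : x + (1 - x) = 1 := by ring
  rw [hx, one_pow] at h
  calc ∑ n ∈ Finset.range (N + 1), (N.choose n : ℝ) * x ^ n * (1 - x) ^ (N - n)
      = ∑ n ∈ Finset.range (N + 1), x ^ n * (1 - x) ^ (N - n) * (N.choose n : ℝ) :=
        Finset.sum_congr rfl fun n _ => by ring
    _ = 1 := h.symm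

lemma term_step (M m : ℕ) (x r : ℝ) :
    ((m : ℝ) + 1) * r * (((M + 1).choose (m + 1) : ℕ) : ℝ) * (x ^ (m + 1) * (1 - x) ^ (M - m))
      = ((M : ℝ) + 1) * x * (r * (M.choose m : ℝ) * x ^ m * (1 - x) ^ (M - m)) := by
  have hc : ((M + 1) * M.choose m : ℕ) = ((M + 1).choose (m + 1) * (m + 1) : ℕ) :=
    Nat.add_one_mul_choose_eq M m
  have hc' : ((M : ℝ) + 1) * (M.choose m : ℝ)
      = (((M + 1).choose (m + 1) : ℕ) : ℝ) * ((m : ℝ) + 1) := by exact_mod_cast hc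
  linear_combination (-(r * x ^ (m + 1) * (1 - x) ^ (M - m))) * hc'

lemma m1 (N : ℕ) (x : ℝ) :
    ∑ n ∈ Finset.range (N + 1), (n : ℝ) * (N.choose n : ℝ) * x ^ n * (1 - x) ^ (N - n)
      = (N : ℝ) * x := by
  cases N with
  | zero => simp
  | succ M =>
    rw [Finset.sum_range_succ']
    simp only [Nat.cast_zero, zero_mul, add_zero]
    calc ∑ m ∈ Finset.range (M + 1),
          ((m + 1 : ℕ) : ℝ) * ((M + 1).choose (m + 1) : ℝ) * x ^ (m + 1) * (1 - x) ^ (M + 1 - (m + 1))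
        = ∑ m ∈ Finset.range (M + 1),
            ((M : ℝ) + 1) * x * ((1 : ℝ) * (M.choose m : ℝ) * x ^ m * (1 - x) ^ (M - m)) := by
          refine Finset.sum_congr rfl fun m _ => ?_
          rw [Nat.succ_sub_succ]
          push_cast
          calc ((m : ℝ) + 1) * ((M + 1).choose (m + 1) : ℝ) * x ^ (m + 1) * (1 - x) ^ (M - m)
              = ((m : ℝ) + 1) * 1 * (((M + 1).choose (m + 1) : ℕ) : ℝ) * (x ^ (m + 1) * (1 - x) ^ (M - m)) := by ring
            _ = ((M : ℝ) + 1) * x * ((1 : ℝ) * (M.choose m : ℝ) * x ^ m * (1 - x) ^ (M - m)) :=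
              term_step M m x 1
      _ = ((M : ℝ) + 1) * x *
            ∑ m ∈ Finset.range (M + 1), (1 : ℝ) * (M.choose m : ℝ) * x ^ m * (1 - x) ^ (M - m) :=
          (Finset.mul_sum _ _ _).symm
      _ = ((M + 1 : ℕ) : ℝ) * x := by
          rw [show ∑ m ∈ Finset.range (M + 1), (1 : ℝ) * (M.choose m : ℝ) * x ^ m * (1 - x) ^ (M - m)
              = ∑ m ∈ Finset.range (M + 1), (M.choose m : ℝ) * x ^ m * (1 - x) ^ (M - m) from
            Finset.sum_congr rfl fun m _ => by ring, sum_p]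
          push_cast; ring

lemma m2 (N : ℕ) (x : ℝ) :
    ∑ n ∈ Finset.range (N + 1), (n : ℝ) * ((n : ℝ) - 1) * (N.choose n : ℝ) * x ^ n * (1 - x) ^ (N - n)
      = (N : ℝ) * ((N : ℝ) - 1) * x ^ 2 := by
  cases N with
  | zero => simp
  | succ M =>
    rw [Finset.sum_range_succ']
    simp only [Nat.cast_zero, zero_mul, add_zero]
    calc ∑ m ∈ Finset.range (M + 1),
          ((m + 1 : ℕ) : ℝ) * (((m + 1 : ℕ) : ℝ) - 1) * ((M + 1).choose (m + 1) : ℝ) * x ^ (m + 1) * (1 - x) ^ (M + 1 - (m + 1))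
        = ∑ m ∈ Finset.range (M + 1),
            ((M : ℝ) + 1) * x * ((m : ℝ) * (M.choose m : ℝ) * x ^ m * (1 - x) ^ (M - m)) := by
          refine Finset.sum_congr rfl fun m _ => ?_
          rw [Nat.succ_sub_succ]
          push_cast
          calc ((m : ℝ) + 1) * ((m : ℝ) + 1 - 1) * ((M + 1).choose (m + 1) : ℝ) * x ^ (m + 1) * (1 - x) ^ (M - m)
              = ((m : ℝ) + 1) * (m : ℝ) * (((M + 1).choose (m + 1) : ℕ) : ℝ) * (x ^ (m + 1) * (1 - x) ^ (M - m)) := by ring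
            _ = ((M : ℝ) + 1) * x * ((m : ℝ) * (M.choose m : ℝ) * x ^ m * (1 - x) ^ (M - m)) :=
              term_step M m x (m : ℝ)
      _ = ((M : ℝ) + 1) * x *
            ∑ m ∈ Finset.range (M + 1), (m : ℝ) * (M.choose m : ℝ) * x ^ m * (1 - x) ^ (M - m) :=
          (Finset.mul_sum _ _ _).symm
      _ = ((M + 1 : ℕ) : ℝ) * (((M + 1 : ℕ) : ℝ) - 1) * x ^ 2 := by
          rw [m1]; push_cast; ring

lemma m3 (N : ℕ) (x : ℝ) :
    ∑ n ∈ Finset.range (N + 1), (n : ℝ) * ((n : ℝ) - 1) * ((n : ℝ) - 2) * (N.choose n : ℝ) * x ^ n * (1 - x) ^ (N - n)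
      = (N : ℝ) * ((N : ℝ) - 1) * ((N : ℝ) - 2) * x ^ 3 := by
  cases N with
  | zero => simp
  | succ M =>
    rw [Finset.sum_range_succ']
    simp only [Nat.cast_zero, zero_mul, add_zero]
    calc ∑ m ∈ Finset.range (M + 1),
          ((m + 1 : ℕ) : ℝ) * (((m + 1 : ℕ) : ℝ) - 1) * (((m + 1 : ℕ) : ℝ) - 2) * ((M + 1).choose (m + 1) : ℝ) * x ^ (m + 1) * (1 - x) ^ (M + 1 - (m + 1))
        = ∑ m ∈ Finset.range (M + 1),
            ((M : ℝ) + 1) * x * ((m : ℝ) * ((m : ℝ) - 1) * (M.choose m : ℝ) * x ^ m * (1 - x) ^ (M - m)) := by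
          refine Finset.sum_congr rfl fun m _ => ?_
          rw [Nat.succ_sub_succ]
          push_cast
          calc ((m : ℝ) + 1) * ((m : ℝ) + 1 - 1) * ((m : ℝ) + 1 - 2) * ((M + 1).choose (m + 1) : ℝ) * x ^ (m + 1) * (1 - x) ^ (M - m)
              = ((m : ℝ) + 1) * ((m : ℝ) * ((m : ℝ) - 1)) * (((M + 1).choose (m + 1) : ℕ) : ℝ) * (x ^ (m + 1) * (1 - x) ^ (M - m)) := by ring
            _ = ((M : ℝ) + 1) * x * (((m : ℝ) * ((m : ℝ) - 1)) * (M.choose m : ℝ) * x ^ m * (1 - x) ^ (M - m)) :=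
              term_step M m x ((m : ℝ) * ((m : ℝ) - 1))
            _ = ((M : ℝ) + 1) * x * ((m : ℝ) * ((m : ℝ) - 1) * (M.choose m : ℝ) * x ^ m * (1 - x) ^ (M - m)) := by ring
      _ = ((M : ℝ) + 1) * x *
            ∑ m ∈ Finset.range (M + 1), (m : ℝ) * ((m : ℝ) - 1) * (M.choose m : ℝ) * x ^ m * (1 - x) ^ (M - m) :=
          (Finset.mul_sum _ _ _).symm
      _ = ((M + 1 : ℕ) : ℝ) * (((M + 1 : ℕ) : ℝ) - 1) * (((M + 1 : ℕ) : ℝ) - 2) * x ^ 3 := by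
          rw [m2]; push_cast; ring

lemma m4 (N : ℕ) (x : ℝ) :
    ∑ n ∈ Finset.range (N + 1), (n : ℝ) * ((n : ℝ) - 1) * ((n : ℝ) - 2) * ((n : ℝ) - 3) * (N.choose n : ℝ) * x ^ n * (1 - x) ^ (N - n)
      = (N : ℝ) * ((N : ℝ) - 1) * ((N : ℝ) - 2) * ((N : ℝ) - 3) * x ^ 4 := by
  cases N with
  | zero => simp
  | succ M =>
    rw [Finset.sum_range_succ']
    simp only [Nat.cast_zero, zero_mul, add_zero]
    calc ∑ m ∈ Finset.range (M + 1),
          ((m + 1 : ℕ) : ℝ) * (((m + 1 : ℕ) : ℝ) - 1) * (((m + 1 : ℕ) : ℝ) - 2) * (((m + 1 : ℕ) : ℝ) - 3) * ((M + 1).choose (m + 1) : ℝ) * x ^ (m + 1) * (1 - x) ^ (M + 1 - (m + 1))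
        = ∑ m ∈ Finset.range (M + 1),
            ((M : ℝ) + 1) * x * ((m : ℝ) * ((m : ℝ) - 1) * ((m : ℝ) - 2) * (M.choose m : ℝ) * x ^ m * (1 - x) ^ (M - m)) := by
          refine Finset.sum_congr rfl fun m _ => ?_
          rw [Nat.succ_sub_succ]
          push_cast
          calc ((m : ℝ) + 1) * ((m : ℝ) + 1 - 1) * ((m : ℝ) + 1 - 2) * ((m : ℝ) + 1 - 3) * ((M + 1).choose (m + 1) : ℝ) * x ^ (m + 1) * (1 - x) ^ (M - m)
              = ((m : ℝ) + 1) * ((m : ℝ) * ((m : ℝ) - 1) * ((m : ℝ) - 2)) * (((M + 1).choose (m + 1) : ℕ) : ℝ) * (x ^ (m + 1) * (1 - x) ^ (M - m)) := by ring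
            _ = ((M : ℝ) + 1) * x * (((m : ℝ) * ((m : ℝ) - 1) * ((m : ℝ) - 2)) * (M.choose m : ℝ) * x ^ m * (1 - x) ^ (M - m)) :=
              term_step M m x ((m : ℝ) * ((m : ℝ) - 1) * ((m : ℝ) - 2))
            _ = ((M : ℝ) + 1) * x * ((m : ℝ) * ((m : ℝ) - 1) * ((m : ℝ) - 2) * (M.choose m : ℝ) * x ^ m * (1 - x) ^ (M - m)) := by ring
      _ = ((M : ℝ) + 1) * x *
            ∑ m ∈ Finset.range (M + 1), (m : ℝ) * ((m : ℝ) - 1) * ((m : ℝ) - 2) * (M.choose m : ℝ) * x ^ m * (1 - x) ^ (M - m) :=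
          (Finset.mul_sum _ _ _).symm
      _ = ((M + 1 : ℕ) : ℝ) * (((M + 1 : ℕ) : ℝ) - 1) * (((M + 1 : ℕ) : ℝ) - 2) * (((M + 1 : ℕ) : ℝ) - 3) * x ^ 4 := by
          rw [m3]; push_cast; ring

lemma cm1 (N : ℕ) (x : ℝ) :
    ∑ n ∈ Finset.range (N + 1), ((n : ℝ) - (N : ℝ) * x) * ((N.choose n : ℝ) * x ^ n * (1 - x) ^ (N - n)) = 0 := by
  have e : ∀ n ∈ Finset.range (N + 1),
      ((n : ℝ) - (N : ℝ) * x) * ((N.choose n : ℝ) * x ^ n * (1 - x) ^ (N - n))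
        = (n : ℝ) * (N.choose n : ℝ) * x ^ n * (1 - x) ^ (N - n)
          + (-((N : ℝ) * x)) * ((N.choose n : ℝ) * x ^ n * (1 - x) ^ (N - n)) :=
    fun n _ => by ring
  rw [Finset.sum_congr rfl e, Finset.sum_add_distrib, ← Finset.mul_sum, m1, sum_p]
  ring

lemma var (N : ℕ) (x : ℝ) :
    ∑ n ∈ Finset.range (N + 1), ((n : ℝ) - (N : ℝ) * x) ^ 2 * ((N.choose n : ℝ) * x ^ n * (1 - x) ^ (N - n))
      = (N : ℝ) * x * (1 - x) := by
  have e : ∀ n ∈ Finset.range (N + 1),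
      ((n : ℝ) - (N : ℝ) * x) ^ 2 * ((N.choose n : ℝ) * x ^ n * (1 - x) ^ (N - n))
        = (n : ℝ) * ((n : ℝ) - 1) * (N.choose n : ℝ) * x ^ n * (1 - x) ^ (N - n)
          + ((1 - 2 * ((N : ℝ) * x)) * ((n : ℝ) * (N.choose n : ℝ) * x ^ n * (1 - x) ^ (N - n))
            + ((N : ℝ) * x) ^ 2 * ((N.choose n : ℝ) * x ^ n * (1 - x) ^ (N - n))) :=
    fun n _ => by ring
  rw [Finset.sum_congr rfl e, Finset.sum_add_distrib, Finset.sum_add_distrib,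
    ← Finset.mul_sum, ← Finset.mul_sum, m2, m1, sum_p]
  ring

lemma mom4 (N : ℕ) (x : ℝ) :
    ∑ n ∈ Finset.range (N + 1), ((n : ℝ) - (N : ℝ) * x) ^ 4 * ((N.choose n : ℝ) * x ^ n * (1 - x) ^ (N - n))
      = (N : ℝ) * x * (1 - x) + 3 * (N : ℝ) * ((N : ℝ) - 2) * x ^ 2 * (1 - x) ^ 2 := by
  have e : ∀ n ∈ Finset.range (N + 1),
      ((n : ℝ) - (N : ℝ) * x) ^ 4 * ((N.choose n : ℝ) * x ^ n * (1 - x) ^ (N - n))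
        = (n : ℝ) * ((n : ℝ) - 1) * ((n : ℝ) - 2) * ((n : ℝ) - 3) * (N.choose n : ℝ) * x ^ n * (1 - x) ^ (N - n)
          + ((6 - 4 * ((N : ℝ) * x)) * ((n : ℝ) * ((n : ℝ) - 1) * ((n : ℝ) - 2) * (N.choose n : ℝ) * x ^ n * (1 - x) ^ (N - n))
            + ((7 - 12 * ((N : ℝ) * x) + 6 * ((N : ℝ) * x) ^ 2) * ((n : ℝ) * ((n : ℝ) - 1) * (N.choose n : ℝ) * x ^ n * (1 - x) ^ (N - n))
              + ((1 - 4 * ((N : ℝ) * x) + 6 * ((N : ℝ) * x) ^ 2 - 4 * ((N : ℝ) * x) ^ 3) * ((n : ℝ) * (N.choose n : ℝ) * x ^ n * (1 - x) ^ (N - n))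
                + ((N : ℝ) * x) ^ 4 * ((N.choose n : ℝ) * x ^ n * (1 - x) ^ (N - n))))) :=
    fun n _ => by ring
  rw [Finset.sum_congr rfl e, Finset.sum_add_distrib, Finset.sum_add_distrib,
    Finset.sum_add_distrib, Finset.sum_add_distrib,
    ← Finset.mul_sum, ← Finset.mul_sum, ← Finset.mul_sum, ← Finset.mul_sum,
    m4, m3, m2, m1, sum_p]
  ring

lemma mom4_le (N : ℕ) (hN : 1 ≤ N) {x : ℝ} (hx0 : 0 ≤ x) (hx1 : x ≤ 1) :
    ∑ n ∈ Finset.range (N + 1), ((n : ℝ) - (N : ℝ) * x) ^ 4 * ((N.choose n : ℝ) * x ^ n * (1 - x) ^ (N - n))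
      ≤ (N : ℝ) ^ 2 := by
  rw [mom4]
  have hN0 : (0 : ℝ) ≤ (N : ℝ) := Nat.cast_nonneg N
  have hN' : (1 : ℝ) ≤ (N : ℝ) := by exact_mod_cast hN
  have hq0 : 0 ≤ x * (1 - x) := mul_nonneg hx0 (by linarith)
  have hq4 : x * (1 - x) ≤ 1 / 4 := by nlinarith [sq_nonneg (x - 1 / 2)]
  have hQ' : (x * (1 - x)) * (x * (1 - x)) ≤ (1 / 4) * (1 / 4) :=
    mul_le_mul hq4 hq4 hq0 (by norm_num)
  have hQ : x ^ 2 * (1 - x) ^ 2 ≤ 1 / 16 := by nlinarith [hQ']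
  have hQ0 : 0 ≤ x ^ 2 * (1 - x) ^ 2 := by positivity
  have h1 : (N : ℝ) * (x * (1 - x)) ≤ (N : ℝ) * (1 / 4) :=
    mul_le_mul_of_nonneg_left hq4 hN0
  have h2 : (3 * (N : ℝ) * (N : ℝ)) * (x ^ 2 * (1 - x) ^ 2) ≤ (3 * (N : ℝ) * (N : ℝ)) * (1 / 16) :=
    mul_le_mul_of_nonneg_left hQ (by positivity)
  have h3 : 0 ≤ (N : ℝ) * (x ^ 2 * (1 - x) ^ 2) := mul_nonneg hN0 hQ0
  have h4 : 0 ≤ ((N : ℝ) - 1) * (N : ℝ) := mul_nonneg (by linarith) hN0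
  nlinarith [h1, h2, h3, h4]

lemma s1lem (N : ℕ) (hN : 1 ≤ N) (x : ℝ) :
    ∑ n ∈ Finset.range (N + 1), ((n : ℝ) / (N : ℝ) - x) * ((N.choose n : ℝ) * x ^ n * (1 - x) ^ (N - n)) = 0 := by
  have hNne : (N : ℝ) ≠ 0 := Nat.cast_ne_zero.2 (by omega)
  calc ∑ n ∈ Finset.range (N + 1), ((n : ℝ) / (N : ℝ) - x) * ((N.choose n : ℝ) * x ^ n * (1 - x) ^ (N - n))
      = ∑ n ∈ Finset.range (N + 1), (1 / (N : ℝ)) * (((n : ℝ) - (N : ℝ) * x) * ((N.choose n : ℝ) * x ^ n * (1 - x) ^ (N - n))) := by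
        refine Finset.sum_congr rfl fun n _ => ?_
        rw [show (n : ℝ) / (N : ℝ) - x = ((n : ℝ) - (N : ℝ) * x) / (N : ℝ) from by field_simp]
        ring
    _ = (1 / (N : ℝ)) * ∑ n ∈ Finset.range (N + 1), ((n : ℝ) - (N : ℝ) * x) * ((N.choose n : ℝ) * x ^ n * (1 - x) ^ (N - n)) :=
        (Finset.mul_sum _ _ _).symm
    _ = 0 := by rw [cm1]; ring

lemma s2lem (N : ℕ) (hN : 1 ≤ N) (x : ℝ) :
    ∑ n ∈ Finset.range (N + 1), ((n : ℝ) / (N : ℝ) - x) ^ 2 * ((N.choose n : ℝ) * x ^ n * (1 - x) ^ (N - n))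
      = x * (1 - x) / (N : ℝ) := by
  have hNne : (N : ℝ) ≠ 0 := Nat.cast_ne_zero.2 (by omega)
  calc ∑ n ∈ Finset.range (N + 1), ((n : ℝ) / (N : ℝ) - x) ^ 2 * ((N.choose n : ℝ) * x ^ n * (1 - x) ^ (N - n))
      = ∑ n ∈ Finset.range (N + 1), (1 / (N : ℝ) ^ 2) * (((n : ℝ) - (N : ℝ) * x) ^ 2 * ((N.choose n : ℝ) * x ^ n * (1 - x) ^ (N - n))) := by
        refine Finset.sum_congr rfl fun n _ => ?_
        rw [show (n : ℝ) / (N : ℝ) - x = ((n : ℝ) - (N : ℝ) * x) / (N : ℝ) from by field_simp]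
        field_simp
    _ = (1 / (N : ℝ) ^ 2) * ∑ n ∈ Finset.range (N + 1), ((n : ℝ) - (N : ℝ) * x) ^ 2 * ((N.choose n : ℝ) * x ^ n * (1 - x) ^ (N - n)) :=
        (Finset.mul_sum _ _ _).symm
    _ = x * (1 - x) / (N : ℝ) := by rw [var]; field_simp

lemma s4lem (N : ℕ) (hN : 1 ≤ N) {x : ℝ} (hx0 : 0 ≤ x) (hx1 : x ≤ 1) :
    ∑ n ∈ Finset.range (N + 1), ((n : ℝ) / (N : ℝ) - x) ^ 4 * ((N.choose n : ℝ) * x ^ n * (1 - x) ^ (N - n))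
      ≤ 1 / (N : ℝ) ^ 2 := by
  have hNne : (N : ℝ) ≠ 0 := Nat.cast_ne_zero.2 (by omega)
  have hNpos : (0 : ℝ) < (N : ℝ) := by exact_mod_cast Nat.lt_of_lt_of_le Nat.zero_lt_one hN
  calc ∑ n ∈ Finset.range (N + 1), ((n : ℝ) / (N : ℝ) - x) ^ 4 * ((N.choose n : ℝ) * x ^ n * (1 - x) ^ (N - n))
      = (1 / (N : ℝ) ^ 4) * ∑ n ∈ Finset.range (N + 1), ((n : ℝ) - (N : ℝ) * x) ^ 4 * ((N.choose n : ℝ) * x ^ n * (1 - x) ^ (N - n)) := by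
        rw [Finset.mul_sum]
        refine Finset.sum_congr rfl fun n _ => ?_
        rw [show (n : ℝ) / (N : ℝ) - x = ((n : ℝ) - (N : ℝ) * x) / (N : ℝ) from by field_simp]
        field_simp
    _ ≤ (1 / (N : ℝ) ^ 4) * (N : ℝ) ^ 2 :=
        mul_le_mul_of_nonneg_left (mom4_le N hN hx0 hx1) (by positivity)
    _ = 1 / (N : ℝ) ^ 2 := by field_simp

lemma key_identity (u : ℝ → ℝ) (x : ℝ) (b c : ℝ) (N : ℕ) (hN : 1 ≤ N) :
    (N : ℝ) * (u x - bernsteinOp N u x)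
      = -(x * (1 - x)) / 2 * c - (N : ℝ) * ∑ n ∈ Finset.range (N + 1),
          (u ((n : ℝ) / (N : ℝ)) - u x - b * ((n : ℝ) / (N : ℝ) - x) - c / 2 * ((n : ℝ) / (N : ℝ) - x) ^ 2)
            * ((N.choose n : ℝ) * x ^ n * (1 - x) ^ (N - n)) := by
  have hNne : (N : ℝ) ≠ 0 := Nat.cast_ne_zero.2 (by omega)
  have step1 : u x - bernsteinOp N u x
      = ∑ n ∈ Finset.range (N + 1), (u x - u ((n : ℝ) / (N : ℝ))) * ((N.choose n : ℝ) * x ^ n * (1 - x) ^ (N - n)) := by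
    rw [bernsteinOp]
    rw [Finset.sum_congr rfl (fun (n : ℕ) _ => (by ring :
      (u x - u ((n : ℝ) / (N : ℝ))) * ((N.choose n : ℝ) * x ^ n * (1 - x) ^ (N - n))
        = u x * ((N.choose n : ℝ) * x ^ n * (1 - x) ^ (N - n))
          - u ((n : ℝ) / (N : ℝ)) * (N.choose n : ℝ) * x ^ n * (1 - x) ^ (N - n))),
      Finset.sum_sub_distrib, ← Finset.mul_sum, sum_p, mul_one]
  have step2 : ∑ n ∈ Finset.range (N + 1), (u x - u ((n : ℝ) / (N : ℝ))) * ((N.choose n : ℝ) * x ^ n * (1 - x) ^ (N - n))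
      = (-b) * ∑ n ∈ Finset.range (N + 1), ((n : ℝ) / (N : ℝ) - x) * ((N.choose n : ℝ) * x ^ n * (1 - x) ^ (N - n))
        + ((-(c / 2)) * ∑ n ∈ Finset.range (N + 1), ((n : ℝ) / (N : ℝ) - x) ^ 2 * ((N.choose n : ℝ) * x ^ n * (1 - x) ^ (N - n))
          + (-1) * ∑ n ∈ Finset.range (N + 1),
              (u ((n : ℝ) / (N : ℝ)) - u x - b * ((n : ℝ) / (N : ℝ) - x) - c / 2 * ((n : ℝ) / (N : ℝ) - x) ^ 2)
                * ((N.choose n : ℝ) * x ^ n * (1 - x) ^ (N - n))) := by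
    rw [Finset.mul_sum, Finset.mul_sum, Finset.mul_sum, ← Finset.sum_add_distrib, ← Finset.sum_add_distrib]
    refine Finset.sum_congr rfl fun n _ => ?_
    ring
  rw [step1, step2, s1lem N hN x, s2lem N hN x]
  field_simp
  ring

lemma rem_bound (G : ℝ → ℝ) (x : ℝ) (hx0 : 0 ≤ x) (hx1 : x ≤ 1)
    (ε δ M : ℝ) (hε : 0 < ε) (hδ : 0 < δ) (hM0 : 0 ≤ M)
    (hloc : ∀ y : ℝ, |y - x| < δ → |G y| ≤ ε * (y - x) ^ 2)
    (hgl : ∀ y ∈ Set.Icc (0 : ℝ) 1, |G y| ≤ M)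
    (N : ℕ) (hN : 1 ≤ N) :
    |∑ n ∈ Finset.range (N + 1), G ((n : ℝ) / (N : ℝ)) * ((N.choose n : ℝ) * x ^ n * (1 - x) ^ (N - n))|
      ≤ ε * (x * (1 - x)) / (N : ℝ) + M / δ ^ 4 / (N : ℝ) ^ 2 := by
  have hN0 : (0 : ℝ) < (N : ℝ) := by exact_mod_cast Nat.lt_of_lt_of_le Nat.zero_lt_one hN
  have hp : ∀ n ∈ Finset.range (N + 1), 0 ≤ (N.choose n : ℝ) * x ^ n * (1 - x) ^ (N - n) :=
    fun n _ => mul_nonneg (mul_nonneg (Nat.cast_nonneg _) (pow_nonneg hx0 _)) (pow_nonneg (by linarith) _)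
  have ht : ∀ n ∈ Finset.range (N + 1), ((n : ℝ) / (N : ℝ)) ∈ Set.Icc (0 : ℝ) 1 := by
    intro n hn
    constructor
    · positivity
    · rw [div_le_one hN0]
      exact_mod_cast Nat.lt_succ_iff.1 (Finset.mem_range.1 hn)
  have hpt : ∀ n ∈ Finset.range (N + 1),
      |G ((n : ℝ) / (N : ℝ)) * ((N.choose n : ℝ) * x ^ n * (1 - x) ^ (N - n))|
        ≤ (ε * ((n : ℝ) / (N : ℝ) - x) ^ 2 + M / δ ^ 4 * ((n : ℝ) / (N : ℝ) - x) ^ 4)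
            * ((N.choose n : ℝ) * x ^ n * (1 - x) ^ (N - n)) := by
    intro n hn
    rw [abs_mul, abs_of_nonneg (hp n hn)]
    refine mul_le_mul_of_nonneg_right ?_ (hp n hn)
    by_cases hcase : |(n : ℝ) / (N : ℝ) - x| < δ
    · have h5 := hloc _ hcase
      have h4 : 0 ≤ M / δ ^ 4 * ((n : ℝ) / (N : ℝ) - x) ^ 4 := by positivity
      linarith
    · push_neg at hcase
      have h1 : |G ((n : ℝ) / (N : ℝ))| ≤ M := hgl _ (ht n hn)
      have h2 : δ ^ 4 ≤ ((n : ℝ) / (N : ℝ) - x) ^ 4 := by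
        calc δ ^ 4 ≤ |(n : ℝ) / (N : ℝ) - x| ^ 4 := pow_le_pow_left₀ hδ.le hcase 4
          _ = ((n : ℝ) / (N : ℝ) - x) ^ 4 := by
              rw [pow_abs, abs_of_nonneg (by positivity)]
      have h3 : M ≤ M / δ ^ 4 * ((n : ℝ) / (N : ℝ) - x) ^ 4 := by
        rw [div_mul_eq_mul_div, le_div_iff₀ (by positivity)]
        exact mul_le_mul_of_nonneg_left h2 hM0
      have h0 : 0 ≤ ε * ((n : ℝ) / (N : ℝ) - x) ^ 2 := by positivity
      linarith
  calc |∑ n ∈ Finset.range (N + 1), G ((n : ℝ) / (N : ℝ)) * ((N.choose n : ℝ) * x ^ n * (1 - x) ^ (N - n))|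
      ≤ ∑ n ∈ Finset.range (N + 1), |G ((n : ℝ) / (N : ℝ)) * ((N.choose n : ℝ) * x ^ n * (1 - x) ^ (N - n))| :=
        Finset.abs_sum_le_sum_abs _ _
    _ ≤ ∑ n ∈ Finset.range (N + 1),
          (ε * ((n : ℝ) / (N : ℝ) - x) ^ 2 + M / δ ^ 4 * ((n : ℝ) / (N : ℝ) - x) ^ 4)
            * ((N.choose n : ℝ) * x ^ n * (1 - x) ^ (N - n)) :=
        Finset.sum_le_sum hpt
    _ = ε * ∑ n ∈ Finset.range (N + 1), ((n : ℝ) / (N : ℝ) - x) ^ 2 * ((N.choose n : ℝ) * x ^ n * (1 - x) ^ (N - n))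
        + M / δ ^ 4 * ∑ n ∈ Finset.range (N + 1), ((n : ℝ) / (N : ℝ) - x) ^ 4 * ((N.choose n : ℝ) * x ^ n * (1 - x) ^ (N - n)) := by
        rw [Finset.mul_sum, Finset.mul_sum, ← Finset.sum_add_distrib]
        exact Finset.sum_congr rfl fun n _ => by ring
    _ ≤ ε * (x * (1 - x) / (N : ℝ)) + M / δ ^ 4 * (1 / (N : ℝ) ^ 2) := by
        have e2 := s2lem N hN x
        have e4 := s4lem N hN hx0 hx1
        gcongr
        · rw [e2]
    _ = ε * (x * (1 - x)) / (N : ℝ) + M / δ ^ 4 / (N : ℝ) ^ 2 := by ring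



lemma peano_bound (u : ℝ → ℝ) (x : ℝ)
    (hd : ∀ᶠ y in nhds x, DifferentiableAt ℝ u y)
    (hd2 : DifferentiableAt ℝ (deriv u) x) :
    ∀ ε > 0, ∃ δ > 0, ∀ y : ℝ, |y - x| < δ →
      |u y - u x - deriv u x * (y - x) - deriv (deriv u) x / 2 * (y - x) ^ 2| ≤ ε * (y - x) ^ 2 := by
  intro ε hε
  set b := deriv u x with hb
  set c := deriv (deriv u) x with hc
  obtain ⟨δ₁, hδ₁, h₁⟩ := Metric.eventually_nhds_iff.1 hd
  have H : HasDerivAt (deriv u) c x := hd2.hasDerivAt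
  rw [hasDerivAt_iff_isLittleO] at H
  obtain ⟨δ₂, hδ₂, h₂⟩ := Metric.eventually_nhds_iff.1 (Asymptotics.isLittleO_iff.1 H hε)
  refine ⟨min δ₁ δ₂, lt_min hδ₁ hδ₂, fun y hy => ?_⟩
  set s : Set ℝ := Metric.closedBall x |y - x| with hs
  have hmem : ∀ t ∈ s, dist t x < min δ₁ δ₂ := by
    intro t ht
    rw [hs, Metric.mem_closedBall] at ht
    exact lt_of_le_of_lt ht hy
  have hderiv : ∀ t ∈ s, HasDerivWithinAt
      (fun y => u y - u x - b * (y - x) - c / 2 * (y - x) ^ 2)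
      (deriv u t - b - c * (t - x)) s t := by
    intro t ht
    have hdt : DifferentiableAt ℝ u t := h₁ (lt_of_lt_of_le (hmem t ht) (min_le_left _ _))
    have A : HasDerivAt (fun y : ℝ => b * (y - x)) b t := by
      simpa using ((hasDerivAt_id t).sub_const x).const_mul b
    have B : HasDerivAt (fun y : ℝ => c / 2 * (y - x) ^ 2) (c * (t - x)) t := by
      have h' := (((hasDerivAt_id t).sub_const x).pow 2).const_mul (c / 2)
      simp only [id_eq, pow_one, Nat.cast_ofNat, mul_one] at h'
      exact h'.congr_deriv (by rw [show (2:ℕ) - 1 = 1 from rfl]; ring)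
    exact (((hdt.hasDerivAt.sub_const (u x)).sub A).sub B).hasDerivWithinAt
  have hbound : ∀ t ∈ s, ‖deriv u t - b - c * (t - x)‖ ≤ ε * |y - x| := by
    intro t ht
    have he : deriv u t - b - c * (t - x) = deriv u t - deriv u x - (t - x) • c := by
      simp [hb, smul_eq_mul]; ring
    rw [he]
    have h2t := h₂ (lt_of_lt_of_le (hmem t ht) (min_le_right _ _))
    refine le_trans h2t ?_
    have : ‖t - x‖ ≤ |y - x| := by
      rw [Real.norm_eq_abs, ← Real.dist_eq]
      exact Metric.mem_closedBall.1 ht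
    exact mul_le_mul_of_nonneg_left this hε.le
  have hxs : x ∈ s := Metric.mem_closedBall_self (abs_nonneg _)
  have hys : y ∈ s := by rw [hs, Metric.mem_closedBall, Real.dist_eq]
  have key := Convex.norm_image_sub_le_of_norm_hasDerivWithin_le hderiv hbound
    (convex_closedBall x |y - x|) hxs hys
  simp only [sub_self, mul_zero, ne_eq, OfNat.ofNat_ne_zero, not_false_eq_true, zero_pow,
    sub_zero, Real.norm_eq_abs] at key
  calc |u y - u x - b * (y - x) - c / 2 * (y - x) ^ 2| ≤ ε * |y - x| * |y - x| := key
    _ = ε * (y - x) ^ 2 := by rw [mul_assoc, abs_mul_abs_self]; ring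

end BVaux

theorem bernstein_voronovskaya (u : ℝ → ℝ) (x : ℝ) (hx : x ∈ Set.Icc (0:ℝ) 1)
    (hb : ∃ C, ∀ y ∈ Set.Icc (0:ℝ) 1, |u y| ≤ C)
    (hd : ∀ᶠ y in nhds x, DifferentiableAt ℝ u y)
    (hd2 : DifferentiableAt ℝ (deriv u) x) :
    Filter.Tendsto (fun N : ℕ => (N : ℝ) * (u x - bernsteinOp N u x))
      Filter.atTop (nhds (-(x * (1 - x)) / 2 * deriv (deriv u) x)) := by
  obtain ⟨C, hC⟩ := hb
  obtain ⟨hx0, hx1⟩ := hx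
  have hC0 : 0 ≤ C := le_trans (abs_nonneg _) (hC x ⟨hx0, hx1⟩)
  have hM0 : 0 ≤ 2 * C + |deriv u x| + |deriv (deriv u) x| / 2 := by positivity
  -- global bound for the Taylor remainder
  have gbound : ∀ y ∈ Set.Icc (0 : ℝ) 1,
      |u y - u x - deriv u x * (y - x) - deriv (deriv u) x / 2 * (y - x) ^ 2|
        ≤ 2 * C + |deriv u x| + |deriv (deriv u) x| / 2 := by
    intro y hy
    have h1 := abs_le.1 (hC y hy)
    have h2 := abs_le.1 (hC x ⟨hx0, hx1⟩)
    have hy0 := hy.1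
    have hy1 := hy.2
    have habs : |y - x| ≤ 1 := abs_le.2 ⟨by linarith, by linarith⟩
    have hb1 : |deriv u x * (y - x)| ≤ |deriv u x| := by
      rw [abs_mul]
      exact mul_le_of_le_one_right (abs_nonneg _) habs
    have hsq : (y - x) ^ 2 ≤ 1 := by nlinarith [abs_nonneg (y - x), sq_abs (y - x)]
    have hc1 : |deriv (deriv u) x / 2 * (y - x) ^ 2| ≤ |deriv (deriv u) x| / 2 := by
      rw [abs_mul, abs_of_nonneg (sq_nonneg (y - x)), abs_div]
      rw [show |(2 : ℝ)| = 2 from abs_of_nonneg (by norm_num)]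
      exact mul_le_of_le_one_right (by positivity) hsq
    have h3 := abs_le.1 hb1
    have h4 := abs_le.1 hc1
    rw [abs_le]
    constructor <;> [skip; skip] <;>
      nlinarith [h1.1, h1.2, h2.1, h2.2, h3.1, h3.2, h4.1, h4.2]
  rw [Metric.tendsto_atTop]
  intro ε hε
  obtain ⟨δ, hδ, hloc⟩ := BVaux.peano_bound u x hd hd2 (ε / 8) (by positivity)
  refine ⟨max 1 (⌈(2 * C + |deriv u x| + |deriv (deriv u) x| / 2) / δ ^ 4 * (8 / ε)⌉₊ + 1),
    fun N hN => ?_⟩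
  have hN1 : 1 ≤ N := le_trans (le_max_left _ _) hN
  have hNpos : (0 : ℝ) < (N : ℝ) := by exact_mod_cast Nat.lt_of_lt_of_le Nat.zero_lt_one hN1
  rw [Real.dist_eq, BVaux.key_identity u x (deriv u x) (deriv (deriv u) x) N hN1]
  rw [show (-(x * (1 - x)) / 2 * deriv (deriv u) x
      - (N : ℝ) * ∑ n ∈ Finset.range (N + 1),
          (u ((n : ℝ) / (N : ℝ)) - u x - deriv u x * ((n : ℝ) / (N : ℝ) - x)
            - deriv (deriv u) x / 2 * ((n : ℝ) / (N : ℝ) - x) ^ 2)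
            * ((N.choose n : ℝ) * x ^ n * (1 - x) ^ (N - n)))
      - -(x * (1 - x)) / 2 * deriv (deriv u) x
      = -((N : ℝ) * ∑ n ∈ Finset.range (N + 1),
          (u ((n : ℝ) / (N : ℝ)) - u x - deriv u x * ((n : ℝ) / (N : ℝ) - x)
            - deriv (deriv u) x / 2 * ((n : ℝ) / (N : ℝ) - x) ^ 2)
            * ((N.choose n : ℝ) * x ^ n * (1 - x) ^ (N - n))) from by ring]
  rw [abs_neg, abs_mul, abs_of_nonneg hNpos.le]
  have hrem := BVaux.rem_bound
    (fun y => u y - u x - deriv u x * (y - x) - deriv (deriv u) x / 2 * (y - x) ^ 2)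
    x hx0 hx1 (ε / 8) δ (2 * C + |deriv u x| + |deriv (deriv u) x| / 2)
    (by positivity) hδ hM0 hloc gbound N hN1
  have hNa : (2 * C + |deriv u x| + |deriv (deriv u) x| / 2) / δ ^ 4 * (8 / ε) < (N : ℝ) := by
    have h1 : (2 * C + |deriv u x| + |deriv (deriv u) x| / 2) / δ ^ 4 * (8 / ε)
        ≤ (⌈(2 * C + |deriv u x| + |deriv (deriv u) x| / 2) / δ ^ 4 * (8 / ε)⌉₊ : ℝ) :=
      Nat.le_ceil _
    have h2 : ((⌈(2 * C + |deriv u x| + |deriv (deriv u) x| / 2) / δ ^ 4 * (8 / ε)⌉₊ + 1 : ℕ) : ℝ)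
        ≤ (N : ℝ) := by
      exact_mod_cast le_trans (le_max_right _ _) hN
    push_cast at h2
    linarith
  have hMδ : (2 * C + |deriv u x| + |deriv (deriv u) x| / 2) / δ ^ 4 < ε / 8 * (N : ℝ) := by
    have hmul := mul_lt_mul_of_pos_left hNa (show (0 : ℝ) < ε / 8 by positivity)
    have heq : ε / 8 * ((2 * C + |deriv u x| + |deriv (deriv u) x| / 2) / δ ^ 4 * (8 / ε))
        = (2 * C + |deriv u x| + |deriv (deriv u) x| / 2) / δ ^ 4 := by
      field_simp
    linarith [heq ▸ hmul]
  have hq1 : x * (1 - x) ≤ 1 := by nlinarith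
  have hq0 : 0 ≤ x * (1 - x) := mul_nonneg hx0 (by linarith)
  calc (N : ℝ) * |∑ n ∈ Finset.range (N + 1),
        (u ((n : ℝ) / (N : ℝ)) - u x - deriv u x * ((n : ℝ) / (N : ℝ) - x)
          - deriv (deriv u) x / 2 * ((n : ℝ) / (N : ℝ) - x) ^ 2)
          * ((N.choose n : ℝ) * x ^ n * (1 - x) ^ (N - n))|
      ≤ (N : ℝ) * (ε / 8 * (x * (1 - x)) / (N : ℝ)
          + (2 * C + |deriv u x| + |deriv (deriv u) x| / 2) / δ ^ 4 / (N : ℝ) ^ 2) :=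
        mul_le_mul_of_nonneg_left hrem hNpos.le
    _ = ε / 8 * (x * (1 - x))
          + (2 * C + |deriv u x| + |deriv (deriv u) x| / 2) / δ ^ 4 / (N : ℝ) := by
        field_simp
    _ < ε := by
        have hr : (2 * C + |deriv u x| + |deriv (deriv u) x| / 2) / δ ^ 4 / (N : ℝ) < ε / 8 := by
          rw [div_lt_iff₀ hNpos]
          linarith
        have hl : ε / 8 * (x * (1 - x)) ≤ ε / 8 :=
          mul_le_of_le_one_right (by positivity) hq1
        linarith
end
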